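/- On the region t > 0 of ℝ⁴ with the Kasner-type metric ds² = −dt² + t^{2p} dx² + t^{2q} dy² + t^{2r} dz², with p ≠ 1, the vector field X = (1/(1−p)) t ∂_t + x ∂_x + ((q−1)/(p−1)) y ∂_y + ((r−1)/(p−1)) z ∂_z is a homothetic vector field with conformal factor 1/(1−p). -/

import Mathlib

open scoped BigOperators
open Real

noncomputable section

variable {ι : Type*} [Fintype ι] [DecidableEq ι]

/-- Partial derivative of a function on coordinate space along the `i`-th coordinate. -/
def pd (f : (ι → ℝ) → ℝ) (i : ι) (x : ι → ℝ) : ℝ :=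
  fderiv ℝ f x (Pi.single i 1)

/-- Christoffel symbols `Γ^k_{ij}` of a metric `g` with inverse `ginv`, in coordinates. -/
def Christoffel (g ginv : (ι → ℝ) → Matrix ι ι ℝ) (k i j : ι) (x : ι → ℝ) : ℝ :=
  (1 / 2) * ∑ l, ginv x k l *
    (pd (fun y => g y l i) j x + pd (fun y => g y l j) i x - pd (fun y => g y i j) l x)

/-- Riemann curvature tensor `R^a_{bcd}` in coordinates. -/
def RiemannUp (g ginv : (ι → ℝ) → Matrix ι ι ℝ) (a b c d : ι) (x : ι → ℝ) : ℝ :=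
  pd (Christoffel g ginv a d b) c x - pd (Christoffel g ginv a c b) d x
    + ∑ e, Christoffel g ginv a c e x * Christoffel g ginv e d b x
    - ∑ e, Christoffel g ginv a d e x * Christoffel g ginv e c b x

/-- Fully covariant Riemann tensor `R_{abcd}`. -/
def RiemannLow (g ginv : (ι → ℝ) → Matrix ι ι ℝ) (a b c d : ι) (x : ι → ℝ) : ℝ :=
  ∑ e, g x a e * RiemannUp g ginv e b c d x

/-- Ricci tensor `R_{bd}`. -/
def RicciT (g ginv : (ι → ℝ) → Matrix ι ι ℝ) (b d : ι) (x : ι → ℝ) : ℝ :=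
  ∑ a, RiemannUp g ginv a b a d x

/-- Scalar curvature. -/
def ScalarCurv (g ginv : (ι → ℝ) → Matrix ι ι ℝ) (x : ι → ℝ) : ℝ :=
  ∑ b, ∑ d, ginv x b d * RicciT g ginv b d x

/-- Lie derivative of the metric `g` along the vector field `X`, in coordinates:
`(𝓛_X g)_{ab} = X^c ∂_c g_{ab} + g_{cb} ∂_a X^c + g_{ac} ∂_b X^c`. -/
def lieD (g : (ι → ℝ) → Matrix ι ι ℝ) (X : (ι → ℝ) → ι → ℝ) (x : ι → ℝ) :
    Matrix ι ι ℝ :=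
  Matrix.of fun a b =>
    (∑ c, X x c * pd (fun y => g y a b) c x)
      + (∑ c, g x c b * pd (fun y => X y c) a x)
      + (∑ c, g x a c * pd (fun y => X y c) b x)

/-- Covariant Hessian `f_{;ab} = ∂_a ∂_b f − Γ^c_{ab} ∂_c f`. -/
def covHess (g ginv : (ι → ℝ) → Matrix ι ι ℝ) (f : (ι → ℝ) → ℝ) (a b : ι)
    (x : ι → ℝ) : ℝ :=
  pd (pd f b) a x - ∑ c, Christoffel g ginv c a b x * pd f c x

end


section Helpers
variable {ι : Type*} [Fintype ι] [DecidableEq ι]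

lemma pd_const (c : ℝ) (j : ι) (x : ι → ℝ) : pd (fun _ => c) j x = 0 := by
  simp [pd]

lemma pd_const_mul_coord (c : ℝ) (i j : ι) (x : ι → ℝ) :
    pd (fun y => c * y i) j x = if j = i then c else 0 := by
  have h : HasFDerivAt (fun y : ι → ℝ => c * y i)
      (c • (ContinuousLinearMap.proj i : (ι → ℝ) →L[ℝ] ℝ)) x :=
    ((ContinuousLinearMap.proj i : (ι → ℝ) →L[ℝ] ℝ).hasFDerivAt).const_mul c
  simp [pd, h.fderiv, Pi.single_apply, eq_comm]

lemma pd_coord (i j : ι) (x : ι → ℝ) :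
    pd (fun y => y i) j x = if j = i then 1 else 0 := by
  have := pd_const_mul_coord (1:ℝ) i j x
  simpa using this

lemma pd_rpow (e : ℝ) (j : ι) (i0 : ι) (x : ι → ℝ) (hx : 0 < x i0) :
    pd (fun y => (y i0) ^ e) j x = if j = i0 then e * (x i0) ^ (e - 1) else 0 := by
  have hd : HasDerivAt (fun t : ℝ => t ^ e) (e * (x i0) ^ (e - 1)) (x i0) := by
    simpa [mul_comm] using Real.hasDerivAt_rpow_const (x := x i0) (p := e) (Or.inl hx.ne')
  have h : HasFDerivAt (fun y : ι → ℝ => (y i0) ^ e)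
      ((e * (x i0) ^ (e - 1)) • (ContinuousLinearMap.proj i0 : (ι → ℝ) →L[ℝ] ℝ)) x :=
    by have := hd.comp_hasFDerivAt x ((ContinuousLinearMap.proj i0 : (ι → ℝ) →L[ℝ] ℝ).hasFDerivAt); exact this
  simp [pd, h.fderiv, Pi.single_apply, eq_comm]

end Helpers

/-- On `t > 0` with the Kasner-type metric
`ds² = −dt² + t^{2p} dx² + t^{2q} dy² + t^{2r} dz²` (`p ≠ 1`), the vector field
`X = (1/(1−p)) t ∂_t + x ∂_x + ((q−1)/(p−1)) y ∂_y + ((r−1)/(p−1)) z ∂_z` is a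
homothetic vector field with conformal factor `1/(1−p)`. -/
theorem kasner_type_homothety_general (p q r : ℝ) (hp : p ≠ 1)
    (g : (Fin 4 → ℝ) → Matrix (Fin 4) (Fin 4) ℝ)
    (hg : g = fun x => Matrix.diagonal
      ![-1, (x 0) ^ (2 * p : ℝ), (x 0) ^ (2 * q : ℝ), (x 0) ^ (2 * r : ℝ)])
    (X : (Fin 4 → ℝ) → Fin 4 → ℝ)
    (hX : X = fun x => ![(1 / (1 - p)) * x 0, x 1,
      ((q - 1) / (p - 1)) * x 2, ((r - 1) / (p - 1)) * x 3]) :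
    ∀ x : Fin 4 → ℝ, 0 < x 0 → lieD g X x = (2 * (1 / (1 - p))) • g x := by
  subst hg hX
  intro x hx
  have hx' : x 0 ≠ 0 := hx.ne'
  have h1p : (1:ℝ) - p ≠ 0 := sub_ne_zero.mpr (Ne.symm hp)
  have hp1 : p - 1 ≠ 0 := sub_ne_zero.mpr hp
  ext a b
  fin_cases a <;> fin_cases b <;>
    simp [lieD, Fin.sum_univ_four, Matrix.diagonal_apply, pd_const, pd_const_mul_coord,
      pd_coord, pd_rpow, hx, Matrix.smul_apply, smul_eq_mul,
      Real.rpow_sub hx, Real.rpow_one] <;>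
    field_simp <;> ring
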